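/- (Nearest-center property of the truncated octahedron) Let ℓ > 0, let c ∈ L_ℓ, and let ξ ∈ T(c). Then for every c' ∈ L_ℓ with c' ≠ c, one has |ξ − c| < |ξ − c'|, where |·| is the Euclidean norm on ℝ³. -/

import Mathlib

noncomputable section

abbrev V3 := EuclideanSpace ℝ (Fin 3)

/-- The body-centered cubic lattice L_ℓ = {ℓn : n ∈ ℤ³} ∪ {ℓn + (ℓ/2,ℓ/2,ℓ/2) : n ∈ ℤ³}. -/
def latt (ℓ : ℝ) : Set V3 :=
  {c | ∃ n : Fin 3 → ℤ, (∀ i, c i = ℓ * n i) ∨ (∀ i, c i = ℓ * n i + ℓ / 2)}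

/-- The open truncated-octahedron cell with center c and parameter ℓ. -/
def Tcell (ℓ : ℝ) (c : V3) : Set V3 :=
  {ξ | (∀ i, |ξ i - c i| < ℓ / 2) ∧
    |ξ 0 - c 0| + |ξ 1 - c 1| + |ξ 2 - c 2| < (3 / 4) * ℓ}


theorem compEven (ℓ x : ℝ) (hℓ : 0 < ℓ) (hx : |x| < ℓ/2) (m : ℤ) (hm : m ≠ 0) :
    2*x*(ℓ*m) < (ℓ*m)^2 := by
  have h1 : x * m ≤ |x| * |(m:ℝ)| := (le_abs_self _).trans_eq (abs_mul x m)
  have ha : (1:ℝ) ≤ |(m:ℝ)| := by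
    rw [← Int.cast_abs]; exact_mod_cast Int.one_le_abs hm
  have hs : |(m:ℝ)|^2 = (m:ℝ)^2 := sq_abs _
  have h2 : |x| * |(m:ℝ)| < ℓ/2 * |(m:ℝ)| :=
    mul_lt_mul_of_pos_right hx (by linarith)
  have h3 : |(m:ℝ)| ≤ |(m:ℝ)|^2 := by nlinarith
  have h4 : ℓ^2 * |(m:ℝ)| ≤ ℓ^2 * |(m:ℝ)|^2 :=
    mul_le_mul_of_nonneg_left h3 (sq_nonneg ℓ)
  have h5 : ℓ * (|x| * |(m:ℝ)|) < ℓ * (ℓ/2 * |(m:ℝ)|) := mul_lt_mul_of_pos_left h2 hℓ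
  have h6 : ℓ * (x * m) ≤ ℓ * (|x| * |(m:ℝ)|) := mul_le_mul_of_nonneg_left h1 hℓ.le
  nlinarith [h4, h5, h6]

theorem compEven' (ℓ x : ℝ) (hℓ : 0 < ℓ) (hx : |x| < ℓ/2) (m : ℤ) :
    2*x*(ℓ*m) ≤ (ℓ*m)^2 := by
  rcases eq_or_ne m 0 with rfl | hm
  · simp
  · exact (compEven ℓ x hℓ hx m hm).le

theorem compOdd1 (ℓ x : ℝ) (hℓ : 0 < ℓ) (hx : |x| < ℓ/2) (k : ℤ) (hk : k ≠ 0) :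
    2*x*(ℓ/2*k) ≤ ℓ*|x| + ℓ^2/2*(|(k:ℝ)| - 1) := by
  have h1 : x * k ≤ |x| * |(k:ℝ)| := (le_abs_self _).trans_eq (abs_mul x k)
  have ha : (1:ℝ) ≤ |(k:ℝ)| := by
    rw [← Int.cast_abs]; exact_mod_cast Int.one_le_abs hk
  have h6 : ℓ * (x * k) ≤ ℓ * (|x| * |(k:ℝ)|) := mul_le_mul_of_nonneg_left h1 hℓ.le
  have h7 : |x| * (|(k:ℝ)| - 1) ≤ ℓ/2 * (|(k:ℝ)| - 1) :=
    mul_le_mul_of_nonneg_right hx.le (by linarith)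
  nlinarith [h6, h7]

theorem compOdd2 (ℓ : ℝ) (k : ℤ) :
    ℓ^2/2*(|(k:ℝ)| - 1) + ℓ^2/4 ≤ (ℓ/2*k)^2 := by
  have hs : |(k:ℝ)|^2 = (k:ℝ)^2 := sq_abs _
  nlinarith [mul_nonneg (sq_nonneg ℓ) (sq_nonneg (|(k:ℝ)| - 1))]

theorem evenCase (ℓ x0 x1 x2 : ℝ) (hℓ : 0 < ℓ)
    (h0 : |x0| < ℓ/2) (h1 : |x1| < ℓ/2) (h2 : |x2| < ℓ/2)
    (k0 k1 k2 : ℤ) (hk : ¬(k0 = 0 ∧ k1 = 0 ∧ k2 = 0)) :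
    2*x0*(ℓ*k0) + 2*x1*(ℓ*k1) + 2*x2*(ℓ*k2) < (ℓ*k0)^2 + (ℓ*k1)^2 + (ℓ*k2)^2 := by
  have e0 := compEven' ℓ x0 hℓ h0 k0
  have e1 := compEven' ℓ x1 hℓ h1 k1
  have e2 := compEven' ℓ x2 hℓ h2 k2
  have : k0 ≠ 0 ∨ k1 ≠ 0 ∨ k2 ≠ 0 := by tauto
  rcases this with h | h | h
  · linarith [compEven ℓ x0 hℓ h0 k0 h]
  · linarith [compEven ℓ x1 hℓ h1 k1 h]
  · linarith [compEven ℓ x2 hℓ h2 k2 h]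

theorem oddCase (ℓ x0 x1 x2 : ℝ) (hℓ : 0 < ℓ)
    (h0 : |x0| < ℓ/2) (h1 : |x1| < ℓ/2) (h2 : |x2| < ℓ/2)
    (hoct : |x0| + |x1| + |x2| < 3/4*ℓ)
    (k0 k1 k2 : ℤ) (hk0 : k0 ≠ 0) (hk1 : k1 ≠ 0) (hk2 : k2 ≠ 0) :
    2*x0*(ℓ/2*k0) + 2*x1*(ℓ/2*k1) + 2*x2*(ℓ/2*k2)
      < (ℓ/2*k0)^2 + (ℓ/2*k1)^2 + (ℓ/2*k2)^2 := by
  have a0 := compOdd1 ℓ x0 hℓ h0 k0 hk0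
  have a1 := compOdd1 ℓ x1 hℓ h1 k1 hk1
  have a2 := compOdd1 ℓ x2 hℓ h2 k2 hk2
  have b0 := compOdd2 ℓ k0
  have b1 := compOdd2 ℓ k1
  have b2 := compOdd2 ℓ k2
  have hm : ℓ * (|x0| + |x1| + |x2|) < ℓ * (3/4*ℓ) := mul_lt_mul_of_pos_left hoct hℓ
  nlinarith [a0, a1, a2, b0, b1, b2, hm]

/-- **Nearest-center property of the truncated octahedron.** If ξ lies in the open cell
with center c ∈ L_ℓ, then c is strictly the nearest lattice point to ξ. -/
theorem truncated_octahedron_nearest_center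
    (ℓ : ℝ) (hℓ : 0 < ℓ) (c : V3) (hc : c ∈ latt ℓ) (ξ : V3) (hξ : ξ ∈ Tcell ℓ c)
    (c' : V3) (hc' : c' ∈ latt ℓ) (hne : c' ≠ c) :
    ‖ξ - c‖ < ‖ξ - c'‖ := by
  obtain ⟨hbox, hoct⟩ := hξ
  obtain ⟨n, hn⟩ := hc
  obtain ⟨m, hm⟩ := hc'
  have hnorm : ∀ a : V3, ‖a‖^2 = (a 0)^2 + (a 1)^2 + (a 2)^2 := by
    intro a
    rw [EuclideanSpace.norm_eq, Real.sq_sqrt (by positivity)]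
    simp [Fin.sum_univ_three, Real.norm_eq_abs, sq_abs]
  refine lt_of_pow_lt_pow_left₀ 2 (norm_nonneg _) ?_
  rw [hnorm, hnorm]
  have hsub : ∀ (a b : V3) (i : Fin 3), (a - b) i = a i - b i := fun _ _ _ => rfl
  simp only [hsub]
  have key : 2*(ξ 0 - c 0)*(c' 0 - c 0) + 2*(ξ 1 - c 1)*(c' 1 - c 1)
      + 2*(ξ 2 - c 2)*(c' 2 - c 2)
      < (c' 0 - c 0)^2 + (c' 1 - c 1)^2 + (c' 2 - c 2)^2 := by
    rcases hn with hn | hn <;> rcases hm with hm | hm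
    · -- both integer type
      have hd : ∀ i, c' i - c i = ℓ * ((m i - n i : ℤ) : ℝ) := by
        intro i; rw [hn i, hm i]; push_cast; ring
      rw [hd 0, hd 1, hd 2]
      refine evenCase ℓ _ _ _ hℓ (hbox 0) (hbox 1) (hbox 2) _ _ _ ?_
      rintro ⟨e0, e1, e2⟩
      apply hne
      ext i
      have hi : i = 0 ∨ i = 1 ∨ i = 2 := by
        revert i; decide
      have : m i = n i := by rcases hi with rfl | rfl | rfl <;> omega
      rw [hn i, hm i, this]
    · -- c integer, c' half
      have hd : ∀ i, c' i - c i = ℓ/2 * ((2*(m i - n i) + 1 : ℤ) : ℝ) := by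
        intro i; rw [hn i, hm i]; push_cast; ring
      rw [hd 0, hd 1, hd 2]
      exact oddCase ℓ _ _ _ hℓ (hbox 0) (hbox 1) (hbox 2) hoct _ _ _
        (by omega) (by omega) (by omega)
    · -- c half, c' integer
      have hd : ∀ i, c' i - c i = ℓ/2 * ((2*(m i - n i) - 1 : ℤ) : ℝ) := by
        intro i; rw [hn i, hm i]; push_cast; ring
      rw [hd 0, hd 1, hd 2]
      exact oddCase ℓ _ _ _ hℓ (hbox 0) (hbox 1) (hbox 2) hoct _ _ _
        (by omega) (by omega) (by omega)
    · -- both half type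
      have hd : ∀ i, c' i - c i = ℓ * ((m i - n i : ℤ) : ℝ) := by
        intro i; rw [hn i, hm i]; push_cast; ring
      rw [hd 0, hd 1, hd 2]
      refine evenCase ℓ _ _ _ hℓ (hbox 0) (hbox 1) (hbox 2) _ _ _ ?_
      rintro ⟨e0, e1, e2⟩
      apply hne
      ext i
      have hi : i = 0 ∨ i = 1 ∨ i = 2 := by
        revert i; decide
      have : m i = n i := by rcases hi with rfl | rfl | rfl <;> omega
      rw [hn i, hm i, this]
  nlinarith [key]
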